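/- For every n and every nonnegative integer m, the number of permutations in Av_n(123) containing exactly m occurrences of the pattern 231 equals the number of permutations in Av_n(123) containing exactly m occurrences of the pattern 312; the same equidistribution holds in Av_n(132). Consequently ν_231(Av_n(123)) = ν_312(Av_n(123)) and ν_231(Av_n(132)) = ν_312(Av_n(132)). -/

import Mathlib

open Finset

/-- The number of occurrences of the pattern `q` (a permutation of length `k`)
in the permutation `p` (of length `n`): the number of strictly increasing index
sequences along which `p` is order-isomorphic to `q`. -/
def numOcc {k n : ℕ} (q : Equiv.Perm (Fin k)) (p : Equiv.Perm (Fin n)) : ℕ :=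
  ((Finset.univ : Finset (Fin k → Fin n)).filter (fun f =>
    (∀ i j : Fin k, i < j → f i < f j) ∧
    (∀ i j : Fin k, q i < q j ↔ p (f i) < p (f j)))).card

/-- `Av n q` : the set of permutations of length `n` avoiding the pattern `q`. -/
def Av (n : ℕ) {k : ℕ} (q : Equiv.Perm (Fin k)) : Finset (Equiv.Perm (Fin n)) :=
  Finset.univ.filter (fun p => numOcc q p = 0)

/-- Total number of occurrences of `q` over a finite set of permutations. -/
def nu {k n : ℕ} (q : Equiv.Perm (Fin k)) (C : Finset (Equiv.Perm (Fin n))) : ℕ :=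
  ∑ p ∈ C, numOcc q p

noncomputable def p12 : Equiv.Perm (Fin 2) := Equiv.ofBijective ![0,1] (by decide)
noncomputable def p21 : Equiv.Perm (Fin 2) := Equiv.ofBijective ![1,0] (by decide)
noncomputable def p123 : Equiv.Perm (Fin 3) := Equiv.ofBijective ![0,1,2] (by decide)
noncomputable def p132 : Equiv.Perm (Fin 3) := Equiv.ofBijective ![0,2,1] (by decide)
noncomputable def p213 : Equiv.Perm (Fin 3) := Equiv.ofBijective ![1,0,2] (by decide)
noncomputable def p231 : Equiv.Perm (Fin 3) := Equiv.ofBijective ![1,2,0] (by decide)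
noncomputable def p312 : Equiv.Perm (Fin 3) := Equiv.ofBijective ![2,0,1] (by decide)
noncomputable def p321 : Equiv.Perm (Fin 3) := Equiv.ofBijective ![2,1,0] (by decide)
noncomputable def p2413 : Equiv.Perm (Fin 4) := Equiv.ofBijective ![1,3,0,2] (by decide)

lemma occ_map {k n : ℕ} (q : Equiv.Perm (Fin k)) (p : Equiv.Perm (Fin n))
    (f : Fin k → Fin n)
    (h1 : ∀ i j : Fin k, i < j → f i < f j)
    (h2 : ∀ i j : Fin k, q i < q j ↔ p (f i) < p (f j)) :
    (∀ i j : Fin k, i < j → (⇑p ∘ f ∘ ⇑q⁻¹) i < (⇑p ∘ f ∘ ⇑q⁻¹) j) ∧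
    (∀ i j : Fin k, q⁻¹ i < q⁻¹ j ↔ p⁻¹ ((⇑p ∘ f ∘ ⇑q⁻¹) i) < p⁻¹ ((⇑p ∘ f ∘ ⇑q⁻¹) j)) := by
  have hf : StrictMono f := fun i j h => h1 i j h
  constructor
  · intro i j hij
    simp only [Function.comp_apply]
    rw [← h2]
    simpa using hij
  · intro i j
    simp only [Function.comp_apply, ← Equiv.Perm.mul_apply, inv_mul_cancel, Equiv.Perm.one_apply]
    exact (hf.lt_iff_lt).symm

lemma numOcc_inv {k n : ℕ} (q : Equiv.Perm (Fin k)) (p : Equiv.Perm (Fin n)) :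
    numOcc q⁻¹ p⁻¹ = numOcc q p := by
  unfold numOcc
  refine Finset.card_nbij' (fun g => ⇑p⁻¹ ∘ g ∘ ⇑q) (fun f => ⇑p ∘ f ∘ ⇑q⁻¹)
    ?_ ?_ ?_ ?_
  · intro g (hg : g ∈ Finset.filter _ _)
    show _ ∈ Finset.filter _ _
    simp only [Finset.mem_filter, Finset.mem_univ, true_and] at hg ⊢
    have := occ_map q⁻¹ p⁻¹ g hg.1 hg.2
    simpa using this
  · intro f (hf : f ∈ Finset.filter _ _)
    show _ ∈ Finset.filter _ _
    simp only [Finset.mem_filter, Finset.mem_univ, true_and] at hf ⊢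
    exact occ_map q p f hf.1 hf.2
  · intro g _
    funext i
    simp
  · intro f _
    funext i
    simp

lemma sq_helper : p123 * p123 = 1 ∧ p132 * p132 = 1 ∧ p231 * p312 = 1 := by
  refine ⟨Equiv.ext fun i => ?_, Equiv.ext fun i => ?_, Equiv.ext fun i => ?_⟩ <;>
    fin_cases i <;> rfl

lemma p123_inv : p123⁻¹ = p123 := inv_eq_of_mul_eq_one_right sq_helper.1
lemma p132_inv : p132⁻¹ = p132 := inv_eq_of_mul_eq_one_right sq_helper.2.1
lemma p231_inv : p231⁻¹ = p312 := inv_eq_of_mul_eq_one_right sq_helper.2.2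
lemma p312_inv : p312⁻¹ = p231 := by
  rw [← p231_inv, inv_inv]

lemma mem_swap {n : ℕ} (r : Equiv.Perm (Fin 3)) (hr : r⁻¹ = r) (m : ℕ)
    (p : Equiv.Perm (Fin n)) (hp : p ∈ (Av n r).filter (fun p => numOcc p231 p = m)) :
    p⁻¹ ∈ (Av n r).filter (fun p => numOcc p312 p = m) := by
  simp only [Av, Finset.mem_filter, Finset.mem_univ, true_and] at hp ⊢
  constructor
  · rw [← hr, numOcc_inv]; exact hp.1
  · rw [← p231_inv, numOcc_inv]; exact hp.2

lemma mem_swap' {n : ℕ} (r : Equiv.Perm (Fin 3)) (hr : r⁻¹ = r) (m : ℕ)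
    (p : Equiv.Perm (Fin n)) (hp : p ∈ (Av n r).filter (fun p => numOcc p312 p = m)) :
    p⁻¹ ∈ (Av n r).filter (fun p => numOcc p231 p = m) := by
  simp only [Av, Finset.mem_filter, Finset.mem_univ, true_and] at hp ⊢
  constructor
  · rw [← hr, numOcc_inv]; exact hp.1
  · rw [← p312_inv, numOcc_inv]; exact hp.2

lemma card_swap {n : ℕ} (r : Equiv.Perm (Fin 3)) (hr : r⁻¹ = r) (m : ℕ) :
    ((Av n r).filter (fun p => numOcc p231 p = m)).card =
      ((Av n r).filter (fun p => numOcc p312 p = m)).card := by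
  exact Finset.card_nbij' (fun p => p⁻¹) (fun p => p⁻¹)
    (mem_swap r hr m) (mem_swap' r hr m)
    (fun p _ => inv_inv p) (fun p _ => inv_inv p)

lemma mem_av_inv {n : ℕ} (r : Equiv.Perm (Fin 3)) (hr : r⁻¹ = r)
    (p : Equiv.Perm (Fin n)) (hp : p ∈ Av n r) : p⁻¹ ∈ Av n r := by
  simp only [Av, Finset.mem_filter, Finset.mem_univ, true_and] at hp ⊢
  rw [← hr, numOcc_inv]; exact hp

lemma nu_swap {n : ℕ} (r : Equiv.Perm (Fin 3)) (hr : r⁻¹ = r) :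
    nu p231 (Av n r) = nu p312 (Av n r) := by
  unfold nu
  refine Finset.sum_nbij' (fun p => p⁻¹) (fun p => p⁻¹)
    (fun p hp => mem_av_inv r hr p hp) (fun p hp => mem_av_inv r hr p hp)
    (fun p _ => inv_inv p) (fun p _ => inv_inv p) ?_
  intro p _
  rw [← p231_inv, numOcc_inv]

/-- In both `Av_n(123)` and `Av_n(132)`, the statistics counting
occurrences of `231` and of `312` are equidistributed; consequently the total
numbers of `231` and `312` patterns agree in each class. -/
theorem stmt_1 (n m : ℕ) :
    ((Av n p123).filter (fun p => numOcc p231 p = m)).card =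
      ((Av n p123).filter (fun p => numOcc p312 p = m)).card ∧
    ((Av n p132).filter (fun p => numOcc p231 p = m)).card =
      ((Av n p132).filter (fun p => numOcc p312 p = m)).card ∧
    nu p231 (Av n p123) = nu p312 (Av n p123) ∧
    nu p231 (Av n p132) = nu p312 (Av n p132) :=
  ⟨card_swap p123 p123_inv m, card_swap p132 p132_inv m,
    nu_swap p123 p123_inv, nu_swap p132 p132_inv⟩
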